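/- Let φ ∈ ℚ̄(X) be a nonconstant rational function that is not of the form c·(ℓ(X))^m for a linear fractional function ℓ and constant c (i.e., φ is not a power of a linear fractional function up to the group action). Then there is no rational function S ∈ ℚ̄(Y), no b ∈ ℚ̄*, and no integer m ≥ 1 such that φ(S(Y)) = b·Y^m. -/

import Mathlib

open Polynomial

section Aux

variable {K : Type*} [Field K] [IsAlgClosed K]

/-- homogeneous evaluation identity -/
lemma aux_E0 (lc : K) (M : Multiset K) (s t : K[X]) (S : RatFunc K) (ht : t ≠ 0)
    (hS : algebraMap K[X] (RatFunc K) s / algebraMap K[X] (RatFunc K) t = S) :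
    (Polynomial.C lc * (M.map fun r => Polynomial.X - Polynomial.C r).prod).eval₂ RatFunc.C S
        * (algebraMap K[X] (RatFunc K) t) ^ Multiset.card M
      = algebraMap K[X] (RatFunc K)
          (Polynomial.C lc * (M.map fun r => s - Polynomial.C r * t).prod) := by
  have hta : (algebraMap K[X] (RatFunc K)) t ≠ 0 := RatFunc.algebraMap_ne_zero ht
  have hmul : S * algebraMap K[X] (RatFunc K) t = algebraMap K[X] (RatFunc K) s := by
    rw [← hS]; exact div_mul_cancel₀ _ hta
  rw [Polynomial.eval₂_mul, Polynomial.eval₂_C, Polynomial.eval₂_multiset_prod,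
    Multiset.map_map, map_mul, map_multiset_prod, Multiset.map_map, mul_assoc]
  congr 1
  rw [← Multiset.prod_replicate, ← Multiset.map_const' M (algebraMap K[X] (RatFunc K) t),
    ← Multiset.prod_map_mul]
  apply congrArg
  apply Multiset.map_congr rfl
  intro r _
  simp only [Function.comp_apply, Polynomial.eval₂_sub, Polynomial.eval₂_X, Polynomial.eval₂_C]
  rw [sub_mul, hmul, map_sub, map_mul, RatFunc.algebraMap_C]

lemma aux_E1 (P s t : K[X]) (S : RatFunc K) (ht : t ≠ 0)
    (hS : algebraMap K[X] (RatFunc K) s / algebraMap K[X] (RatFunc K) t = S) :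
    P.eval₂ RatFunc.C S * (algebraMap K[X] (RatFunc K) t) ^ P.natDegree
      = algebraMap K[X] (RatFunc K)
          (Polynomial.C P.leadingCoeff * (P.roots.map fun r => s - Polynomial.C r * t).prod) := by
  have hsp : P.Splits := IsAlgClosed.splits P
  have hcard : Multiset.card P.roots = P.natDegree := (Polynomial.splits_iff_card_roots).mp hsp
  rw [← hcard]
  nth_rewrite 1 [hsp.eq_prod_roots]
  exact aux_E0 _ _ _ _ _ ht hS

lemma aux_coprime_of_roots {A B : K[X]} (hA : A ≠ 0)
    (h : ∀ y : K, A.eval y = 0 → B.eval y ≠ 0) : IsCoprime A B := by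
  apply EuclideanDomain.isCoprime_of_dvd
  · rintro ⟨rfl, -⟩; exact hA rfl
  · intro z hz hz0 hzA hzB
    have hdeg : z.degree ≠ 0 := fun h0 =>
      (mem_nonunits_iff.mp hz) (Polynomial.isUnit_iff_degree_eq_zero.mpr h0)
    obtain ⟨y, hy⟩ := IsAlgClosed.exists_root z hdeg
    exact h y (Polynomial.eval_eq_zero_of_dvd_of_eval_eq_zero hzA hy)
      (Polynomial.eval_eq_zero_of_dvd_of_eval_eq_zero hzB hy)

lemma aux_dvd_C_mul_X_pow {c : K} {m : ℕ} {d : K[X]} (hc : c ≠ 0)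
    (h : d ∣ Polynomial.C c * Polynomial.X ^ m) :
    ∃ (c0 : K) (e : ℕ), c0 ≠ 0 ∧ d = Polynomial.C c0 * Polynomial.X ^ e := by
  have hu : IsUnit (Polynomial.C c : K[X]) := Polynomial.isUnit_C.mpr (isUnit_iff_ne_zero.mpr hc)
  have h2 : d ∣ Polynomial.X ^ m := (hu.dvd_mul_left).mp h
  obtain ⟨i, _, hassoc⟩ := (dvd_prime_pow Polynomial.prime_X m).mp h2
  obtain ⟨u, hu'⟩ := hassoc.symm
  obtain ⟨c0, hc0u, hc0⟩ := Polynomial.isUnit_iff.mp u.isUnit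
  exact ⟨c0, i, hc0u.ne_zero, by rw [← hu', ← hc0, mul_comm]⟩

end Aux

section Aux

variable {K : Type*} [Field K] [IsAlgClosed K]

lemma aux_main (P Q s t : K[X]) (S : RatFunc K) (b : K) (m : ℕ)
    (hP0 : P ≠ 0) (hQ0 : Q ≠ 0) (hPQ : IsCoprime P Q)
    (hd1 : 1 ≤ max P.natDegree Q.natDegree)
    (ht : t ≠ 0) (hst : IsCoprime s t)
    (hSnd : algebraMap K[X] (RatFunc K) s / algebraMap K[X] (RatFunc K) t = S)
    (hSc : ∀ r : K, S ≠ RatFunc.C r) (hb : b ≠ 0)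
    (heq : P.eval₂ RatFunc.C S / Q.eval₂ RatFunc.C S = RatFunc.C b * RatFunc.X ^ m) :
    ∃ (k a b' c d : K) (m' : ℕ), a * d - b' * c ≠ 0 ∧
      algebraMap K[X] (RatFunc K) P / algebraMap K[X] (RatFunc K) Q
        = RatFunc.C k * ((RatFunc.C a * RatFunc.X + RatFunc.C b') /
            (RatFunc.C c * RatFunc.X + RatFunc.C d)) ^ m' := by
  obtain ⟨n, hn⟩ : ∃ n, n = max P.natDegree Q.natDegree := ⟨_, rfl⟩
  have hpn : P.natDegree ≤ n := hn ▸ le_max_left _ _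
  have hqn : Q.natDegree ≤ n := hn ▸ le_max_right _ _
  have hta : algebraMap K[X] (RatFunc K) t ≠ 0 := RatFunc.algebraMap_ne_zero ht
  have hlP : P.leadingCoeff ≠ 0 := Polynomial.leadingCoeff_ne_zero.mpr hP0
  have hlQ : Q.leadingCoeff ≠ 0 := Polynomial.leadingCoeff_ne_zero.mpr hQ0
  have hstc : ∀ cs ct : K, s = Polynomial.C cs → t = Polynomial.C ct → False := by
    intro cs ct hs1 ht1
    apply hSc (cs / ct)
    rw [← hSnd, hs1, ht1, RatFunc.algebraMap_C, RatFunc.algebraMap_C, ← map_div₀]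
  have hF0 : ∀ r : K, s - Polynomial.C r * t ≠ 0 := by
    intro r h0
    have hs1 : s = Polynomial.C r * t := by linear_combination h0
    apply hSc r
    rw [← hSnd, hs1, map_mul, RatFunc.algebraMap_C, mul_div_assoc, div_self hta, mul_one]
  have hroots : ∀ r, r ∈ P.roots → r ∈ Q.roots → False := by
    intro r hrP hrQ
    have h1 : (Polynomial.X - Polynomial.C r) ∣ P :=
      Polynomial.dvd_iff_isRoot.mpr (Polynomial.isRoot_of_mem_roots hrP)
    have h2 : (Polynomial.X - Polynomial.C r) ∣ Q :=
      Polynomial.dvd_iff_isRoot.mpr (Polynomial.isRoot_of_mem_roots hrQ)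
    exact Polynomial.not_isUnit_X_sub_C r (hPQ.isUnit_of_dvd' h1 h2)
  have hcardP : Multiset.card P.roots = P.natDegree :=
    (Polynomial.splits_iff_card_roots).mp (IsAlgClosed.splits P)
  have hcardQ : Multiset.card Q.roots = Q.natDegree :=
    (Polynomial.splits_iff_card_roots).mp (IsAlgClosed.splits Q)
  have hPd : P = Polynomial.C P.leadingCoeff * (P.roots.map fun a => Polynomial.X - Polynomial.C a).prod :=
    (IsAlgClosed.splits P).eq_prod_roots
  have hQd : Q = Polynomial.C Q.leadingCoeff * (Q.roots.map fun a => Polynomial.X - Polynomial.C a).prod :=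
    (IsAlgClosed.splits Q).eq_prod_roots
  -- the two sides of the cleared-denominator equation
  have hQe : Q.eval₂ RatFunc.C S ≠ 0 := by
    intro h0
    rw [h0, div_zero] at heq
    have hCb : (RatFunc.C b : RatFunc K) ≠ 0 := by
      rw [← RatFunc.algebraMap_C]
      exact RatFunc.algebraMap_ne_zero (Polynomial.C_ne_zero.mpr hb)
    exact mul_ne_zero hCb (pow_ne_zero _ RatFunc.X_ne_zero) heq.symm
  have heqm : P.eval₂ RatFunc.C S = (RatFunc.C b * RatFunc.X ^ m) * Q.eval₂ RatFunc.C S :=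
    (div_eq_iff hQe).mp heq
  have h1 := aux_E1 P s t S ht hSnd
  have h2 := aux_E1 Q s t S ht hSnd
  have hkey : Polynomial.C P.leadingCoeff * (P.roots.map fun r => s - Polynomial.C r * t).prod * t ^ (n - P.natDegree)
      = Polynomial.C b * Polynomial.X ^ m *
        (Polynomial.C Q.leadingCoeff * (Q.roots.map fun r => s - Polynomial.C r * t).prod * t ^ (n - Q.natDegree)) := by
    apply RatFunc.algebraMap_injective
    simp only [map_mul, map_pow] at h1 h2 ⊢
    rw [← h1, ← h2]
    calc P.eval₂ RatFunc.C S * (algebraMap K[X] (RatFunc K) t) ^ P.natDegree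
          * (algebraMap K[X] (RatFunc K) t) ^ (n - P.natDegree)
        = P.eval₂ RatFunc.C S * (algebraMap K[X] (RatFunc K) t) ^ n := by
          rw [mul_assoc, ← pow_add, Nat.add_sub_cancel' hpn]
      _ = (RatFunc.C b * RatFunc.X ^ m) * (Q.eval₂ RatFunc.C S * (algebraMap K[X] (RatFunc K) t) ^ n) := by
          rw [heqm]; ring
      _ = algebraMap K[X] (RatFunc K) (Polynomial.C b) * (algebraMap K[X] (RatFunc K) Polynomial.X) ^ m *
            (Q.eval₂ RatFunc.C S * (algebraMap K[X] (RatFunc K) t) ^ Q.natDegree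
              * (algebraMap K[X] (RatFunc K) t) ^ (n - Q.natDegree)) := by
          rw [RatFunc.algebraMap_C, RatFunc.algebraMap_X,
            mul_assoc (Q.eval₂ RatFunc.C S), ← pow_add, Nat.add_sub_cancel' hqn]
  have hprodne : ∀ (R : K[X]), (0 : K[X]) ∉ R.roots.map fun r => s - Polynomial.C r * t := by
    intro R hmem
    obtain ⟨r, _, hr0⟩ := Multiset.mem_map.mp hmem
    exact hF0 r hr0
  have hA0 : Polynomial.C P.leadingCoeff * (P.roots.map fun r => s - Polynomial.C r * t).prod
      * t ^ (n - P.natDegree) ≠ 0 :=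
    mul_ne_zero (mul_ne_zero (Polynomial.C_ne_zero.mpr hlP)
      (Multiset.prod_ne_zero (hprodne P))) (pow_ne_zero _ ht)
  have hcop : IsCoprime
      (Polynomial.C P.leadingCoeff * (P.roots.map fun r => s - Polynomial.C r * t).prod * t ^ (n - P.natDegree))
      (Polynomial.C Q.leadingCoeff * (Q.roots.map fun r => s - Polynomial.C r * t).prod * t ^ (n - Q.natDegree)) := by
    apply aux_coprime_of_roots hA0
    intro y hAy hBy
    have hsty : ¬(s.eval y = 0 ∧ t.eval y = 0) := by
      rintro ⟨hy1, hy2⟩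
      obtain ⟨u, v, huv⟩ := hst
      have := congrArg (Polynomial.eval y) huv
      simp [hy1, hy2] at this
    have extract : ∀ (R : K[X]) (e : ℕ),
        Polynomial.eval y (Polynomial.C R.leadingCoeff * (R.roots.map fun r => s - Polynomial.C r * t).prod * t ^ e) = 0 →
        R ≠ 0 →
        (∃ r ∈ R.roots, Polynomial.eval y s = r * Polynomial.eval y t) ∨
          (e ≠ 0 ∧ Polynomial.eval y t = 0) := by
      intro R e hRe hR0
      rw [Polynomial.eval_mul, Polynomial.eval_mul, Polynomial.eval_C, Polynomial.eval_pow,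
        Polynomial.eval_multiset_prod, Multiset.map_map] at hRe
      rcases mul_eq_zero.mp hRe with h' | h'
      · rcases mul_eq_zero.mp h' with h'' | h''
        · exact absurd h'' (Polynomial.leadingCoeff_ne_zero.mpr hR0)
        · left
          obtain ⟨r, hr, hr0⟩ := Multiset.mem_map.mp (Multiset.prod_eq_zero_iff.mp h'')
          refine ⟨r, hr, ?_⟩
          simp only [Function.comp_apply, Polynomial.eval_sub, Polynomial.eval_mul,
            Polynomial.eval_C] at hr0
          linear_combination hr0
      · have he : e ≠ 0 := by rintro rfl; rw [pow_zero] at h'; exact one_ne_zero h'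
        exact Or.inr ⟨he, (pow_eq_zero_iff he).mp h'⟩
    rcases extract P (n - P.natDegree) hAy hP0 with ⟨r, hrP, hr⟩ | ⟨hne1, hty⟩
    · rcases extract Q (n - Q.natDegree) hBy hQ0 with ⟨r', hrQ, hr'⟩ | ⟨hne2, hty⟩
      · by_cases hty : Polynomial.eval y t = 0
        · exact hsty ⟨by rw [hr, hty, mul_zero], hty⟩
        · have : r = r' := mul_right_cancel₀ hty (by rw [← hr, ← hr'])
          exact hroots r hrP (this ▸ hrQ)
      · exact hsty ⟨by rw [hr, hty, mul_zero], hty⟩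
    · rcases extract Q (n - Q.natDegree) hBy hQ0 with ⟨r', hrQ, hr'⟩ | ⟨hne2, hty2⟩
      · exact hsty ⟨by rw [hr', hty, mul_zero], hty⟩
      · omega
  have hBdvd : (Polynomial.C Q.leadingCoeff * (Q.roots.map fun r => s - Polynomial.C r * t).prod * t ^ (n - Q.natDegree)) ∣
      (Polynomial.C P.leadingCoeff * (P.roots.map fun r => s - Polynomial.C r * t).prod * t ^ (n - P.natDegree)) :=
    ⟨Polynomial.C b * Polynomial.X ^ m, by rw [hkey]; ring⟩
  have hBu : IsUnit (Polynomial.C Q.leadingCoeff * (Q.roots.map fun r => s - Polynomial.C r * t).prod * t ^ (n - Q.natDegree)) :=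
    hcop.symm.isUnit_of_dvd hBdvd
  obtain ⟨cB, hcBu, hcB⟩ := Polynomial.isUnit_iff.mp hBu
  have hcB0 : cB ≠ 0 := hcBu.ne_zero
  have hAeq : Polynomial.C P.leadingCoeff * (P.roots.map fun r => s - Polynomial.C r * t).prod * t ^ (n - P.natDegree)
      = Polynomial.C (b * cB) * Polynomial.X ^ m := by
    rw [hkey, ← hcB, map_mul]; ring
  have hQfac : ∀ r ∈ Q.roots, ∃ c : K, c ≠ 0 ∧ s - Polynomial.C r * t = Polynomial.C c := by
    intro r hr
    have hdvd : (s - Polynomial.C r * t) ∣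
        (Polynomial.C Q.leadingCoeff * (Q.roots.map fun r => s - Polynomial.C r * t).prod * t ^ (n - Q.natDegree)) :=
      ((Multiset.dvd_prod (Multiset.mem_map_of_mem _ hr)).mul_left _).mul_right _
    obtain ⟨c, hcu, hc⟩ := Polynomial.isUnit_iff.mp (isUnit_of_dvd_unit hdvd hBu)
    exact ⟨c, hcu.ne_zero, hc.symm⟩
  have htB : n - Q.natDegree ≠ 0 → ∃ c : K, c ≠ 0 ∧ t = Polynomial.C c := by
    intro hne
    have hdvd : t ∣ (Polynomial.C Q.leadingCoeff * (Q.roots.map fun r => s - Polynomial.C r * t).prod * t ^ (n - Q.natDegree)) :=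
      (dvd_pow_self t hne).mul_left _
    obtain ⟨c, hcu, hc⟩ := Polynomial.isUnit_iff.mp (isUnit_of_dvd_unit hdvd hBu)
    exact ⟨c, hcu.ne_zero, hc.symm⟩
  have hPfac : ∀ r ∈ P.roots, ∃ (c : K) (e : ℕ), c ≠ 0 ∧ s - Polynomial.C r * t = Polynomial.C c * Polynomial.X ^ e := by
    intro r hr
    apply aux_dvd_C_mul_X_pow (mul_ne_zero hb hcB0)
    rw [← hAeq]
    exact ((Multiset.dvd_prod (Multiset.mem_map_of_mem _ hr)).mul_left _).mul_right _
  have htA : n - P.natDegree ≠ 0 → ∃ (c : K) (e : ℕ), c ≠ 0 ∧ t = Polynomial.C c * Polynomial.X ^ e := by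
    intro hne
    apply aux_dvd_C_mul_X_pow (mul_ne_zero hb hcB0)
    rw [← hAeq]
    exact (dvd_pow_self t hne).mul_left _
  -- the four exclusion rules
  have R1 : ∀ r1 r2 c1 c2 : K, r1 ≠ r2 → s - Polynomial.C r1 * t = Polynomial.C c1 →
      s - Polynomial.C r2 * t = Polynomial.C c2 → False := by
    intro r1 r2 c1 c2 h12 hr1 hr2
    have hd : r2 - r1 ≠ 0 := sub_ne_zero.mpr (Ne.symm h12)
    have h3 : Polynomial.C (r2 - r1) * t = Polynomial.C (c1 - c2) := by
      rw [map_sub, map_sub]; linear_combination hr1 - hr2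
    have ht1 : t = Polynomial.C ((r2 - r1)⁻¹ * (c1 - c2)) := by
      rw [map_mul, ← h3, ← mul_assoc, ← map_mul, inv_mul_cancel₀ hd, map_one, one_mul]
    have hs1 : s = Polynomial.C (c1 + r1 * ((r2 - r1)⁻¹ * (c1 - c2))) := by
      rw [map_add, map_mul]
      linear_combination hr1 + Polynomial.C r1 * ht1
    exact hstc _ _ hs1 ht1
  have R3 : ∀ r c ct : K, t = Polynomial.C ct → s - Polynomial.C r * t = Polynomial.C c → False := by
    intro r c ct ht1 hr1
    refine hstc (c + r * ct) ct ?_ ht1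
    rw [map_add, map_mul]
    linear_combination hr1 + Polynomial.C r * ht1
  have R2 : ∀ r1 r2 : K, r1 ≠ r2 → Polynomial.X ∣ s - Polynomial.C r1 * t →
      Polynomial.X ∣ s - Polynomial.C r2 * t → False := by
    intro r1 r2 h12 hd1' hd2'
    have hd : r2 - r1 ≠ 0 := sub_ne_zero.mpr (Ne.symm h12)
    have h3 : Polynomial.C (r2 - r1) * t = (s - Polynomial.C r1 * t) - (s - Polynomial.C r2 * t) := by
      rw [map_sub]; ring
    have ht2 : t = Polynomial.C (r2 - r1)⁻¹ * (Polynomial.C (r2 - r1) * t) := by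
      rw [← mul_assoc, ← map_mul, inv_mul_cancel₀ hd, map_one, one_mul]
    have hXt : Polynomial.X ∣ t := by
      rw [ht2, h3]
      exact (dvd_sub hd1' hd2').mul_left _
    have hXs : Polynomial.X ∣ s := by
      rw [show s = (s - Polynomial.C r1 * t) + Polynomial.C r1 * t by ring]
      exact dvd_add hd1' (hXt.mul_left _)
    exact Polynomial.not_isUnit_X (hst.isUnit_of_dvd' hXs hXt)
  have R4 : ∀ r : K, Polynomial.X ∣ t → Polynomial.X ∣ s - Polynomial.C r * t → False := by
    intro r hXt hd1'
    have hXs : Polynomial.X ∣ s := by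
      rw [show s = (s - Polynomial.C r * t) + Polynomial.C r * t by ring]
      exact dvd_add hd1' (hXt.mul_left _)
    exact Polynomial.not_isUnit_X (hst.isUnit_of_dvd' hXs hXt)
  have hPdich : ∀ r ∈ P.roots, (∃ c : K, c ≠ 0 ∧ s - Polynomial.C r * t = Polynomial.C c) ∨
      Polynomial.X ∣ s - Polynomial.C r * t := by
    intro r hr
    obtain ⟨c, e, hc, hce⟩ := hPfac r hr
    rcases Nat.eq_zero_or_pos e with rfl | he
    · exact Or.inl ⟨c, hc, by rw [hce, pow_zero, mul_one]⟩
    · right; rw [hce]; exact (dvd_pow_self _ he.ne').mul_left _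
  have htAdich : n - P.natDegree ≠ 0 →
      (∃ c : K, c ≠ 0 ∧ t = Polynomial.C c) ∨ Polynomial.X ∣ t := by
    intro hne
    obtain ⟨c, e, hc, hce⟩ := htA hne
    rcases Nat.eq_zero_or_pos e with rfl | he
    · exact Or.inl ⟨c, hc, by rw [hce, pow_zero, mul_one]⟩
    · right; rw [hce]; exact (dvd_pow_self _ he.ne').mul_left _
  -- final case analysis
  rcases lt_trichotomy P.natDegree Q.natDegree with hlt | heq' | hgt
  · -- P.natDegree < Q.natDegree : φ = k / (X - β)^q
    have hQne : Q.roots ≠ 0 := Multiset.card_pos.mp (by rw [hcardQ]; omega)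
    obtain ⟨β, hβ⟩ := Multiset.exists_mem_of_ne_zero hQne
    obtain ⟨cβ, hcβ0, hcβ⟩ := hQfac β hβ
    have hQall : ∀ r ∈ Q.roots, r = β := by
      intro r hr
      by_contra hne
      obtain ⟨c, hc0, hc⟩ := hQfac r hr
      exact R1 r β c cβ hne hc hcβ
    have hnp0 : n - P.natDegree ≠ 0 := by omega
    rcases htAdich hnp0 with ⟨ct, hct0, hct⟩ | hXt
    · exact (R3 β cβ ct hct hcβ).elim
    have hPempty : P.roots = 0 := by
      rw [Multiset.eq_zero_iff_forall_notMem]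
      intro r hr
      rcases hPdich r hr with ⟨c, hc0, hc⟩ | hXr
      · exact R1 r β c cβ (fun h => hroots r hr (h ▸ hβ)) hc hcβ
      · exact R4 r hXt hXr
    have hP_C : P = Polynomial.C P.leadingCoeff := by
      rw [hPd, hPempty]; simp
    refine ⟨P.leadingCoeff / Q.leadingCoeff, 0, 1, 1, -β, Q.natDegree, by norm_num, ?_⟩
    have hQprod : Q.roots.map (fun a => Polynomial.X - Polynomial.C a)
        = Q.roots.map (fun _ => Polynomial.X - Polynomial.C β) :=
      Multiset.map_congr rfl (fun r hr => by rw [hQall r hr])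
    nth_rewrite 1 [hP_C]
    nth_rewrite 1 [hQd]
    rw [hQprod, Multiset.map_const', Multiset.prod_replicate, hcardQ,
      map_mul, map_pow, map_sub, RatFunc.algebraMap_C, RatFunc.algebraMap_C,
      RatFunc.algebraMap_C, RatFunc.algebraMap_X,
      map_zero, zero_mul, zero_add, map_one, one_mul, map_div₀, map_neg,
      ← sub_eq_add_neg, div_pow, one_pow, mul_one_div, div_div]
  · -- P.natDegree = Q.natDegree : φ = k ((X-α)/(X-β))^p
    have hp1 : 1 ≤ P.natDegree := by omega
    have hQne : Q.roots ≠ 0 := Multiset.card_pos.mp (by rw [hcardQ]; omega)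
    have hPne : P.roots ≠ 0 := Multiset.card_pos.mp (by rw [hcardP]; omega)
    obtain ⟨β, hβ⟩ := Multiset.exists_mem_of_ne_zero hQne
    obtain ⟨cβ, hcβ0, hcβ⟩ := hQfac β hβ
    have hQall : ∀ r ∈ Q.roots, r = β := by
      intro r hr
      by_contra hne
      obtain ⟨c, hc0, hc⟩ := hQfac r hr
      exact R1 r β c cβ hne hc hcβ
    have hPX : ∀ r ∈ P.roots, Polynomial.X ∣ s - Polynomial.C r * t := by
      intro r hr
      rcases hPdich r hr with ⟨c, hc0, hc⟩ | hXr
      · exact (R1 r β c cβ (fun h => hroots r hr (h ▸ hβ)) hc hcβ).elim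
      · exact hXr
    obtain ⟨α, hα⟩ := Multiset.exists_mem_of_ne_zero hPne
    have hPall : ∀ r ∈ P.roots, r = α := by
      intro r hr
      by_contra hne
      exact R2 r α hne (hPX r hr) (hPX α hα)
    have hαβ : α ≠ β := fun h => hroots α hα (h ▸ hβ)
    refine ⟨P.leadingCoeff / Q.leadingCoeff, 1, -α, 1, -β, P.natDegree, ?_, ?_⟩
    · intro h0
      apply hαβ
      apply sub_eq_zero.mp
      linear_combination h0
    have hQprod : Q.roots.map (fun a => Polynomial.X - Polynomial.C a)
        = Q.roots.map (fun _ => Polynomial.X - Polynomial.C β) :=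
      Multiset.map_congr rfl (fun r hr => by rw [hQall r hr])
    have hPprod : P.roots.map (fun a => Polynomial.X - Polynomial.C a)
        = P.roots.map (fun _ => Polynomial.X - Polynomial.C α) :=
      Multiset.map_congr rfl (fun r hr => by rw [hPall r hr])
    nth_rewrite 1 [hPd, hQd]
    rw [hPprod, hQprod, Multiset.map_const', Multiset.map_const',
      Multiset.prod_replicate, Multiset.prod_replicate, hcardP, hcardQ, ← heq',
      map_mul, map_mul, map_pow, map_pow, map_sub, map_sub,
      RatFunc.algebraMap_C, RatFunc.algebraMap_C, RatFunc.algebraMap_C,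
      RatFunc.algebraMap_C, RatFunc.algebraMap_X,
      map_one, one_mul, map_neg, map_neg, ← sub_eq_add_neg, ← sub_eq_add_neg,
      map_div₀, div_pow, mul_div_mul_comm]
  · -- Q.natDegree < P.natDegree : φ = k (X - α)^p
    have hPne : P.roots ≠ 0 := Multiset.card_pos.mp (by rw [hcardP]; omega)
    have hnq0 : n - Q.natDegree ≠ 0 := by omega
    obtain ⟨ct, hct0, hct⟩ := htB hnq0
    have hQempty : Q.roots = 0 := by
      rw [Multiset.eq_zero_iff_forall_notMem]
      intro r hr
      obtain ⟨c, hc0, hc⟩ := hQfac r hr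
      exact R3 r c ct hct hc
    have hQ_C : Q = Polynomial.C Q.leadingCoeff := by
      rw [hQd, hQempty]; simp
    have hPX : ∀ r ∈ P.roots, Polynomial.X ∣ s - Polynomial.C r * t := by
      intro r hr
      rcases hPdich r hr with ⟨c, hc0, hc⟩ | hXr
      · exact (R3 r c ct hct hc).elim
      · exact hXr
    obtain ⟨α, hα⟩ := Multiset.exists_mem_of_ne_zero hPne
    have hPall : ∀ r ∈ P.roots, r = α := by
      intro r hr
      by_contra hne
      exact R2 r α hne (hPX r hr) (hPX α hα)
    refine ⟨P.leadingCoeff / Q.leadingCoeff, 1, -α, 0, 1, P.natDegree, by norm_num, ?_⟩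
    have hPprod : P.roots.map (fun a => Polynomial.X - Polynomial.C a)
        = P.roots.map (fun _ => Polynomial.X - Polynomial.C α) :=
      Multiset.map_congr rfl (fun r hr => by rw [hPall r hr])
    nth_rewrite 1 [hQ_C]
    nth_rewrite 1 [hPd]
    rw [hPprod, Multiset.map_const', Multiset.prod_replicate, hcardP,
      map_mul, map_pow, map_sub, RatFunc.algebraMap_C, RatFunc.algebraMap_C,
      RatFunc.algebraMap_C, RatFunc.algebraMap_X,
      map_zero, zero_mul, zero_add, map_one, one_mul, map_neg, ← sub_eq_add_neg,
      div_one, map_div₀, mul_div_right_comm]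

end Aux

/-- Let `φ ∈ ℚ̄(X)` be a nonconstant rational function which is not of the form
`c · ℓ(X)^m` for a linear fractional function `ℓ` and a constant `c`. Then there is no
rational function `S ∈ ℚ̄(Y)`, no `b ∈ ℚ̄*` and no `m ≥ 1` with `φ(S(Y)) = b · Y^m`. -/
theorem stmt_5 (φ : RatFunc (AlgebraicClosure ℚ))
    (hnc : ∀ k : AlgebraicClosure ℚ, φ ≠ RatFunc.C k)
    (hnp : ¬ ∃ (k a b c d : AlgebraicClosure ℚ) (m : ℕ), a * d - b * c ≠ 0 ∧
      φ = RatFunc.C k * ((RatFunc.C a * RatFunc.X + RatFunc.C b) /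
        (RatFunc.C c * RatFunc.X + RatFunc.C d)) ^ m) :
    ¬ ∃ (S : RatFunc (AlgebraicClosure ℚ)) (b : AlgebraicClosure ℚ) (m : ℕ),
      b ≠ 0 ∧ 1 ≤ m ∧ φ.eval (RatFunc.C) S = RatFunc.C b * RatFunc.X ^ m := by
  rintro ⟨S, b, m, hb, hm, heq⟩
  by_cases hSc : ∃ r : AlgebraicClosure ℚ, S = RatFunc.C r
  · obtain ⟨r, rfl⟩ := hSc
    have heval : φ.eval RatFunc.C (RatFunc.C r)
        = RatFunc.C (φ.num.eval r / φ.denom.eval r) := by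
      simp only [RatFunc.eval]
      rw [Polynomial.eval₂_at_apply, Polynomial.eval₂_at_apply, ← map_div₀]
    rw [heval] at heq
    have hpoly : (Polynomial.C (φ.num.eval r / φ.denom.eval r) : (AlgebraicClosure ℚ)[X])
        = Polynomial.C b * Polynomial.X ^ m := by
      apply RatFunc.algebraMap_injective
      rw [map_mul, map_pow, RatFunc.algebraMap_C, RatFunc.algebraMap_C, RatFunc.algebraMap_X]
      exact heq
    have hdeg := congrArg Polynomial.natDegree hpoly
    rw [Polynomial.natDegree_C, Polynomial.natDegree_C_mul hb, Polynomial.natDegree_X_pow] at hdeg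
    omega
  · push_neg at hSc
    have hφ0 : φ ≠ 0 := fun h0 => hnc 0 (by rw [h0, map_zero])
    have hd1 : 1 ≤ max φ.num.natDegree φ.denom.natDegree := by
      by_contra hcon
      push_neg at hcon
      have hp0 : φ.num.natDegree = 0 := by omega
      have hq0 : φ.denom.natDegree = 0 := by omega
      apply hnc (φ.num.coeff 0 / φ.denom.coeff 0)
      conv_lhs => rw [← RatFunc.num_div_denom φ]
      rw [Polynomial.eq_C_of_natDegree_eq_zero hp0, Polynomial.eq_C_of_natDegree_eq_zero hq0,
        RatFunc.algebraMap_C, RatFunc.algebraMap_C, ← map_div₀]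
      simp [Polynomial.coeff_C_zero]
    simp only [RatFunc.eval] at heq
    obtain ⟨k, a, b', c, d, m', hdet, hform⟩ :=
      aux_main φ.num φ.denom S.num S.denom S b m (RatFunc.num_ne_zero hφ0) φ.denom_ne_zero
        φ.isCoprime_num_denom hd1 S.denom_ne_zero S.isCoprime_num_denom S.num_div_denom hSc hb heq
    exact hnp ⟨k, a, b', c, d, m', hdet, by rw [← hform, RatFunc.num_div_denom]⟩
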